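/- arXiv:1310.5543 — 4 statements merged into one kernel-verified Lean document; each statement's English description precedes it below -/
import Mathlib

section
/- Let ν be a finite positive Borel measure on ℝ^d and define K(x,y) = ∫_{ℝ^d} exp(i (x−y)·ξ) dν(ξ). Let Z ⊆ ℝ^d be a Borel set and μ a finite signed Borel measure supported on Z. Then ∫_Z K(x,t) dμ(t) = 0 for all x ∈ Z if and only if μ̂(ξ) = ∫_Z exp(−i x·ξ) dμ(x) = 0 for all ξ in the support of ν. -/
open MeasureTheory Complex
open scoped ComplexConjugate

section Euclid
variable {d : ℕ}

local notation "E" => EuclideanSpace ℝ (Fin d)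

lemma norm_exp_mul_I' (c : ℂ) (hc : c.re = 0) (r : ℝ) : ‖Complex.exp (c * r)‖ = 1 := by
  rw [Complex.norm_exp]
  simp [Complex.mul_re, hc]

lemma integrable_of_norm_le' {A : Type*} [MeasurableSpace A] (ρ : Measure A) [IsFiniteMeasure ρ]
    {G : Type*} [NormedAddCommGroup G]
    {f : A → G} (hf : AEStronglyMeasurable f ρ) {C : ℝ} (hC : ∀ a, ‖f a‖ ≤ C) :
    Integrable f ρ :=
  (integrable_const C).mono' hf (Filter.Eventually.of_forall hC)

lemma conj_exp_neg_I' (r : ℝ) :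
    (starRingEnd ℂ) (Complex.exp (-Complex.I * r)) = Complex.exp (Complex.I * r) := by
  rw [← Complex.exp_conj]
  congr 1
  simp [map_mul, Complex.conj_ofReal]

lemma exp_inner_sub' (x t ξ : E) :
    Complex.exp (Complex.I * ((inner ℝ (x - t) ξ : ℝ) : ℂ))
      = Complex.exp (Complex.I * ((inner ℝ x ξ : ℝ) : ℂ))
        * Complex.exp (-Complex.I * ((inner ℝ t ξ : ℝ) : ℂ)) := by
  rw [← Complex.exp_add]
  congr 1
  rw [inner_sub_left]
  push_cast
  ring

lemma cont_exp_inner_right' (c : ℂ) (x : E) :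
    Continuous fun ξ : E => Complex.exp (c * ((inner ℝ x ξ : ℝ) : ℂ)) :=
  Complex.continuous_exp.comp <| continuous_const.mul <|
    Complex.continuous_ofReal.comp (Continuous.inner continuous_const continuous_id)

lemma cont_exp_inner_left' (c : ℂ) (ξ : E) :
    Continuous fun x : E => Complex.exp (c * ((inner ℝ x ξ : ℝ) : ℂ)) :=
  Complex.continuous_exp.comp <| continuous_const.mul <|
    Complex.continuous_ofReal.comp (Continuous.inner continuous_id continuous_const)

lemma cont_integral_exp_inner' (ρ : Measure E) [IsFiniteMeasure ρ] (c : ℂ) (hc : c.re = 0) :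
    Continuous fun ξ : E => ∫ x, Complex.exp (c * ((inner ℝ x ξ : ℝ) : ℂ)) ∂ρ := by
  apply continuous_of_dominated (bound := fun _ => (1 : ℝ))
  · exact fun ξ => ((cont_exp_inner_left' c ξ).aestronglyMeasurable)
  · exact fun ξ => Filter.Eventually.of_forall fun x => le_of_eq (norm_exp_mul_I' c hc _)
  · exact integrable_const 1
  · exact Filter.Eventually.of_forall fun x => cont_exp_inner_right' c x

lemma norm_integral_exp_inner_le' (ρ : Measure E) [IsFiniteMeasure ρ] (c : ℂ) (hc : c.re = 0)
    (ξ : E) : ‖∫ x, Complex.exp (c * ((inner ℝ x ξ : ℝ) : ℂ)) ∂ρ‖ ≤ (ρ Set.univ).toReal := by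
  calc ‖∫ x, Complex.exp (c * ((inner ℝ x ξ : ℝ) : ℂ)) ∂ρ‖
      ≤ ∫ x, ‖Complex.exp (c * ((inner ℝ x ξ : ℝ) : ℂ))‖ ∂ρ := norm_integral_le_integral_norm _
    _ = ∫ _x, (1 : ℝ) ∂ρ := by
        refine integral_congr_ae (Filter.Eventually.of_forall fun x => ?_)
        exact norm_exp_mul_I' c hc _
    _ = (ρ Set.univ).toReal := by simp; rfl

/-- First Fubini swap: `∫_ρ ∫_ν exp(i⟪x-t,ξ⟫) = ∫_ν exp(i⟪x,ξ⟫) ∫_ρ exp(-i⟪t,ξ⟫)`. -/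
lemma swap_E' (ρ : Measure E) (ν : Measure E) [IsFiniteMeasure ρ] [IsFiniteMeasure ν] (x : E) :
    ∫ t, ∫ ξ, Complex.exp (Complex.I * ((inner ℝ (x - t) ξ : ℝ) : ℂ)) ∂ν ∂ρ
      = ∫ ξ, Complex.exp (Complex.I * ((inner ℝ x ξ : ℝ) : ℂ))
          * ∫ t, Complex.exp (-Complex.I * ((inner ℝ t ξ : ℝ) : ℂ)) ∂ρ ∂ν := by
  rw [integral_integral_swap]
  · refine integral_congr_ae (Filter.Eventually.of_forall fun ξ => ?_)
    simp_rw [exp_inner_sub' x]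
    rw [integral_const_mul]
  · apply integrable_of_norm_le' (ρ.prod ν)
    · refine Continuous.aestronglyMeasurable ?_
      exact Complex.continuous_exp.comp <| continuous_const.mul <|
        Complex.continuous_ofReal.comp
          (Continuous.inner (continuous_const.sub continuous_fst) continuous_snd)
    · exact fun p => le_of_eq (norm_exp_mul_I' _ Complex.I_re _)

/-- Second Fubini swap: pull a bounded continuous factor through. -/
lemma swap_J' (ρ : Measure E) (ν : Measure E) [IsFiniteMeasure ρ] [IsFiniteMeasure ν]
    {g : E → ℂ} (hg : Continuous g) {C : ℝ} (hgb : ∀ ξ, ‖g ξ‖ ≤ C) :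
    ∫ x, ∫ ξ, Complex.exp (Complex.I * ((inner ℝ x ξ : ℝ) : ℂ)) * g ξ ∂ν ∂ρ
      = ∫ ξ, (∫ x, Complex.exp (Complex.I * ((inner ℝ x ξ : ℝ) : ℂ)) ∂ρ) * g ξ ∂ν := by
  rw [integral_integral_swap]
  · refine integral_congr_ae (Filter.Eventually.of_forall fun ξ => ?_)
    simp only []
    rw [integral_mul_const]
  · apply integrable_of_norm_le' (ρ.prod ν) (C := C)
    · refine Continuous.aestronglyMeasurable ?_
      exact (Complex.continuous_exp.comp <| continuous_const.mul <|
        Complex.continuous_ofReal.comp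
          (Continuous.inner continuous_fst continuous_snd)).mul (hg.comp continuous_snd)
    · intro p
      have := norm_exp_mul_I' Complex.I Complex.I_re (inner ℝ p.1 p.2 : ℝ)
      calc ‖Complex.exp (Complex.I * ((inner ℝ p.1 p.2 : ℝ) : ℂ)) * g p.2‖
          = ‖g p.2‖ := by rw [norm_mul, this, one_mul]
        _ ≤ C := hgb p.2

end Euclid

/-- complement of the support of a measure is null, in a second countable space. -/
lemma measure_compl_measSupport' {X : Type*} [TopologicalSpace X] [MeasurableSpace X]
    [SecondCountableTopology X] (ν : Measure X) :
    ν ({x : X | ∀ U : Set X, IsOpen U → x ∈ U → 0 < ν U}ᶜ) = 0 := by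
  obtain ⟨B, hBc, -, hB⟩ := TopologicalSpace.exists_countable_basis X
  have hsub : {x : X | ∀ U : Set X, IsOpen U → x ∈ U → 0 < ν U}ᶜ ⊆ ⋃₀ {b ∈ B | ν b = 0} := by
    intro x hx
    simp only [Set.mem_compl_iff, Set.mem_setOf_eq, not_forall] at hx
    obtain ⟨U, hU, hxU, hpos⟩ := hx
    have hν : ν U = 0 := by
      by_contra h
      exact hpos (lt_of_le_of_ne (zero_le) (Ne.symm h))
    obtain ⟨b, hbB, hxb, hbU⟩ := hB.exists_subset_of_mem_open hxU hU
    exact ⟨b, ⟨hbB, le_antisymm (hν ▸ measure_mono hbU) (zero_le)⟩, hxb⟩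
  refine measure_mono_null hsub ?_
  exact (measure_sUnion_null_iff (hBc.mono (Set.sep_subset _ _))).2 fun b hb => hb.2


open MeasureTheory

/-- Integral of a complex-valued function against a finite signed Borel measure, via the
Jordan decomposition `μ = μ⁺ - μ⁻`. -/
noncomputable def csintegral {X : Type*} [MeasurableSpace X]
    (μ : SignedMeasure X) (f : X → ℂ) : ℂ :=
  (∫ x, f x ∂μ.toJordanDecomposition.posPart) -
    (∫ x, f x ∂μ.toJordanDecomposition.negPart)

/-- The support of a positive Borel measure: points all of whose open neighborhoods have
positive measure. -/
def measSupport {X : Type*} [TopologicalSpace X] [MeasurableSpace X]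
    (ν : Measure X) : Set X :=
  {x : X | ∀ U : Set X, IsOpen U → x ∈ U → 0 < ν U}

/-- For the translation-invariant kernel `K(x,y) = ∫ exp(i(x-y)·ξ) dν(ξ)` with finite
positive spectral measure `ν`, a finite signed measure `μ` supported on a Borel set `Z`
satisfies `∫_Z K(x,t) dμ(t) = 0` for all `x ∈ Z` if and only if its Fourier transform
vanishes on the support of `ν`. -/
theorem kernel_annihilation_iff_fourier_vanishes_on_support
    (d : ℕ) (ν : Measure (EuclideanSpace ℝ (Fin d))) [IsFiniteMeasure ν]
    (K : EuclideanSpace ℝ (Fin d) → EuclideanSpace ℝ (Fin d) → ℂ)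
    (hK : ∀ x y, K x y = ∫ ξ, Complex.exp (Complex.I * ((inner ℝ (x - y) ξ : ℝ))) ∂ν)
    (Z : Set (EuclideanSpace ℝ (Fin d))) (hZ : MeasurableSet Z)
    (μ : SignedMeasure (EuclideanSpace ℝ (Fin d)))
    (hsupp : ∀ s : Set (EuclideanSpace ℝ (Fin d)),
      MeasurableSet s → s ⊆ Zᶜ → μ s = 0) :
    (∀ x ∈ Z, csintegral μ (fun t => K x t) = 0) ↔
      ∀ ξ ∈ measSupport ν,
        csintegral μ (fun x => Complex.exp (-Complex.I * ((inner ℝ x ξ : ℝ)))) = 0 := by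
  classical
  obtain ⟨i, hi₁, hi₂, hi₃, hpos, hneg⟩ := μ.toJordanDecomposition_spec
  set P := μ.toJordanDecomposition.posPart with hPdef
  set N := μ.toJordanDecomposition.negPart with hNdef
  haveI hPfin : IsFiniteMeasure P := by rw [hPdef]; infer_instance
  haveI hNfin : IsFiniteMeasure N := by rw [hNdef]; infer_instance
  have hcs : ∀ f : EuclideanSpace ℝ (Fin d) → ℂ,
      csintegral μ f = (∫ x, f x ∂P) - ∫ x, f x ∂N := fun f => rfl
  have hre : (-Complex.I).re = 0 := by simp
  set F : EuclideanSpace ℝ (Fin d) → ℂ := fun ξ =>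
    (∫ x, Complex.exp (-Complex.I * ((inner ℝ x ξ : ℝ) : ℂ)) ∂P)
      - ∫ x, Complex.exp (-Complex.I * ((inner ℝ x ξ : ℝ) : ℂ)) ∂N with hFdef
  have hFcs : ∀ ξ : EuclideanSpace ℝ (Fin d),
      csintegral μ (fun x => Complex.exp (-Complex.I * ((inner ℝ x ξ : ℝ) : ℂ))) = F ξ :=
    fun _ => rfl
  have hFcont : Continuous F :=
    (cont_integral_exp_inner' P _ hre).sub (cont_integral_exp_inner' N _ hre)
  have hFbdd : ∀ ξ, ‖F ξ‖ ≤ (P Set.univ).toReal + (N Set.univ).toReal := fun ξ =>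
    (norm_sub_le _ _).trans (add_le_add (norm_integral_exp_inner_le' P _ hre ξ)
      (norm_integral_exp_inner_le' N _ hre ξ))
  have hconj : ∀ (ρ : Measure (EuclideanSpace ℝ (Fin d))) (ξ : EuclideanSpace ℝ (Fin d)),
      ∫ x, Complex.exp (Complex.I * ((inner ℝ x ξ : ℝ) : ℂ)) ∂ρ
        = (starRingEnd ℂ) (∫ x, Complex.exp (-Complex.I * ((inner ℝ x ξ : ℝ) : ℂ)) ∂ρ) := by
    intro ρ ξ
    rw [← integral_conj]
    exact integral_congr_ae (Filter.Eventually.of_forall fun x => (conj_exp_neg_I' _).symm)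
  have hE : ∀ x, csintegral μ (fun t => K x t)
      = ∫ ξ, Complex.exp (Complex.I * ((inner ℝ x ξ : ℝ) : ℂ)) * F ξ ∂ν := by
    intro x
    have intP : Integrable (fun ξ : EuclideanSpace ℝ (Fin d) =>
        Complex.exp (Complex.I * ((inner ℝ x ξ : ℝ) : ℂ))
          * ∫ t, Complex.exp (-Complex.I * ((inner ℝ t ξ : ℝ) : ℂ)) ∂P) ν := by
      apply integrable_of_norm_le' ν (C := (P Set.univ).toReal)
      · exact ((cont_exp_inner_right' _ x).mul
          (cont_integral_exp_inner' P _ hre)).aestronglyMeasurable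
      · intro ξ
        rw [norm_mul, norm_exp_mul_I' _ Complex.I_re, one_mul]
        exact norm_integral_exp_inner_le' P _ hre ξ
    have intN : Integrable (fun ξ : EuclideanSpace ℝ (Fin d) =>
        Complex.exp (Complex.I * ((inner ℝ x ξ : ℝ) : ℂ))
          * ∫ t, Complex.exp (-Complex.I * ((inner ℝ t ξ : ℝ) : ℂ)) ∂N) ν := by
      apply integrable_of_norm_le' ν (C := (N Set.univ).toReal)
      · exact ((cont_exp_inner_right' _ x).mul
          (cont_integral_exp_inner' N _ hre)).aestronglyMeasurable
      · intro ξ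
        rw [norm_mul, norm_exp_mul_I' _ Complex.I_re, one_mul]
        exact norm_integral_exp_inner_le' N _ hre ξ
    calc csintegral μ (fun t => K x t)
        = (∫ t, ∫ ξ, Complex.exp (Complex.I * ((inner ℝ (x - t) ξ : ℝ) : ℂ)) ∂ν ∂P)
          - ∫ t, ∫ ξ, Complex.exp (Complex.I * ((inner ℝ (x - t) ξ : ℝ) : ℂ)) ∂ν ∂N := by
          rw [hcs]; simp_rw [hK]
      _ = (∫ ξ, Complex.exp (Complex.I * ((inner ℝ x ξ : ℝ) : ℂ))
            * ∫ t, Complex.exp (-Complex.I * ((inner ℝ t ξ : ℝ) : ℂ)) ∂P ∂ν)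
          - ∫ ξ, Complex.exp (Complex.I * ((inner ℝ x ξ : ℝ) : ℂ))
            * ∫ t, Complex.exp (-Complex.I * ((inner ℝ t ξ : ℝ) : ℂ)) ∂N ∂ν := by
          rw [swap_E' P ν x, swap_E' N ν x]
      _ = ∫ ξ, Complex.exp (Complex.I * ((inner ℝ x ξ : ℝ) : ℂ)) * F ξ ∂ν := by
          rw [← integral_sub intP intN]
          refine integral_congr_ae (Filter.Eventually.of_forall fun ξ => ?_)
          simp only [hFdef]
          ring
  have intJP : Integrable (fun ξ : EuclideanSpace ℝ (Fin d) =>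
      (∫ x, Complex.exp (Complex.I * ((inner ℝ x ξ : ℝ) : ℂ)) ∂P) * F ξ) ν := by
    apply integrable_of_norm_le' ν
      (C := (P Set.univ).toReal * ((P Set.univ).toReal + (N Set.univ).toReal))
    · exact ((cont_integral_exp_inner' P _ Complex.I_re).mul hFcont).aestronglyMeasurable
    · intro ξ
      rw [norm_mul]
      exact mul_le_mul (norm_integral_exp_inner_le' P _ Complex.I_re ξ) (hFbdd ξ)
        (norm_nonneg _) ENNReal.toReal_nonneg
  have intJN : Integrable (fun ξ : EuclideanSpace ℝ (Fin d) =>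
      (∫ x, Complex.exp (Complex.I * ((inner ℝ x ξ : ℝ) : ℂ)) ∂N) * F ξ) ν := by
    apply integrable_of_norm_le' ν
      (C := (N Set.univ).toReal * ((P Set.univ).toReal + (N Set.univ).toReal))
    · exact ((cont_integral_exp_inner' N _ Complex.I_re).mul hFcont).aestronglyMeasurable
    · intro ξ
      rw [norm_mul]
      exact mul_le_mul (norm_integral_exp_inner_le' N _ Complex.I_re ξ) (hFbdd ξ)
        (norm_nonneg _) ENNReal.toReal_nonneg
  have hJ : csintegral μ (fun x => ∫ ξ,
        Complex.exp (Complex.I * ((inner ℝ x ξ : ℝ) : ℂ)) * F ξ ∂ν)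
      = ∫ ξ, (starRingEnd ℂ) (F ξ) * F ξ ∂ν := by
    rw [hcs, swap_J' P ν hFcont hFbdd, swap_J' N ν hFcont hFbdd, ← integral_sub intJP intJN]
    refine integral_congr_ae (Filter.Eventually.of_forall fun ξ => ?_)
    simp only [← sub_mul]
    congr 1
    rw [hconj P ξ, hconj N ξ, ← map_sub]
  constructor
  · intro h ξ0 hξ0
    simp only [measSupport, Set.mem_setOf_eq] at hξ0
    have hPZc : P Zᶜ = 0 := by
      rw [hpos, SignedMeasure.toMeasureOfZeroLE_apply _ hi₂ hi₁ hZ.compl]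
      have h0 : μ (i ∩ Zᶜ) = 0 := hsupp _ (hi₁.inter hZ.compl) Set.inter_subset_right
      simp [h0]
    have hNZc : N Zᶜ = 0 := by
      rw [hneg, SignedMeasure.toMeasureOfLEZero_apply _ hi₃ hi₁.compl hZ.compl]
      have h0 : μ (iᶜ ∩ Zᶜ) = 0 := hsupp _ (hi₁.compl.inter hZ.compl) Set.inter_subset_right
      simp [h0]
    have hPZ : ∀ᵐ x ∂P, x ∈ Z := by
      rw [ae_iff]; exact hPZc
    have hNZ : ∀ᵐ x ∂N, x ∈ Z := by
      rw [ae_iff]; exact hNZc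
    have e1 : ∫ x, (∫ ξ, Complex.exp (Complex.I * ((inner ℝ x ξ : ℝ) : ℂ)) * F ξ ∂ν) ∂P = 0 :=
      integral_eq_zero_of_ae (hPZ.mono fun x hx => by
        simp only [Pi.zero_apply]; rw [← hE x]; exact h x hx)
    have e2 : ∫ x, (∫ ξ, Complex.exp (Complex.I * ((inner ℝ x ξ : ℝ) : ℂ)) * F ξ ∂ν) ∂N = 0 :=
      integral_eq_zero_of_ae (hNZ.mono fun x hx => by
        simp only [Pi.zero_apply]; rw [← hE x]; exact h x hx)
    have hJ0 : ∫ ξ, (starRingEnd ℂ) (F ξ) * F ξ ∂ν = 0 := by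
      rw [← hJ, hcs, e1, e2, sub_zero]
    have hnsq : ∫ ξ, Complex.normSq (F ξ) ∂ν = 0 := by
      have h2 : ∫ ξ, ((Complex.normSq (F ξ) : ℝ) : ℂ) ∂ν = 0 := by
        rw [← hJ0]
        refine integral_congr_ae (Filter.Eventually.of_forall fun ξ => ?_)
        exact Complex.normSq_eq_conj_mul_self
      have h3 : ∫ ξ, ((Complex.normSq (F ξ) : ℝ) : ℂ) ∂ν
          = ((∫ ξ, Complex.normSq (F ξ) ∂ν : ℝ) : ℂ) := integral_ofReal
      rw [h3] at h2
      exact_mod_cast h2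
    have hint : Integrable (fun ξ => Complex.normSq (F ξ)) ν := by
      refine integrable_of_norm_le' ν
        (C := ((P Set.univ).toReal + (N Set.univ).toReal) ^ 2)
        ((Complex.continuous_normSq.comp hFcont).aestronglyMeasurable) (fun ξ => ?_)
      · have h1 : Complex.normSq (F ξ) = ‖F ξ‖ ^ 2 := by
          rw [← Complex.sq_norm]
        rw [Real.norm_eq_abs, _root_.abs_of_nonneg (Complex.normSq_nonneg _), h1]
        exact pow_le_pow_left₀ (norm_nonneg _) (hFbdd ξ) 2
    have hFae : ∀ᵐ ξ ∂ν, F ξ = 0 := by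
      have h3 := (integral_eq_zero_iff_of_nonneg_ae
        (Filter.Eventually.of_forall fun ξ => Complex.normSq_nonneg (F ξ)) hint).1 hnsq
      exact h3.mono fun ξ hξ => Complex.normSq_eq_zero.1 hξ
    rw [hFcs ξ0]
    by_contra hne
    have hopen : IsOpen {ξ : EuclideanSpace ℝ (Fin d) | F ξ ≠ 0} :=
      isOpen_compl_singleton.preimage hFcont
    have hν0 : ν {ξ | F ξ ≠ 0} = 0 := by
      rw [ae_iff] at hFae; exact hFae
    have hlt := hξ0 _ hopen hne
    rw [hν0] at hlt
    exact lt_irrefl _ hlt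
  · intro h x _hx
    have hFae : ∀ᵐ ξ ∂ν, F ξ = 0 := by
      have hc := measure_compl_measSupport' ν
      rw [ae_iff]
      refine measure_mono_null ?_ hc
      intro ξ hξ
      simp only [Set.mem_compl_iff, Set.mem_setOf_eq]
      intro hsup
      exact hξ (by rw [← hFcs ξ]; exact h ξ hsup)
    rw [hE x]
    exact integral_eq_zero_of_ae (hFae.mono fun ξ hξ => by simp [hξ])
end

section
/- Let X be a metric space, I a countable index set, and φₙ ∈ C(X) for n ∈ I such that the series K(x,y) = Σ_{n∈I} φₙ(x)φₙ(y) converges uniformly on Z × Z for every compact Z ⊆ X. Then for a compact set Z ⊆ X and a finite signed Borel measure μ on Z: ∫_Z K(x,y) dμ(y) = 0 for all x ∈ Z if and only if ∫_Z φₙ(y) dμ(y) = 0 for all n ∈ I. -/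
open MeasureTheory Filter

/-- Integral of a real-valued function against a finite signed Borel measure, via the
Jordan decomposition `μ = μ⁺ - μ⁻`. -/
noncomputable def sintegral {X : Type*} [MeasurableSpace X]
    (μ : SignedMeasure X) (f : X → ℝ) : ℝ :=
  (∫ x, f x ∂μ.toJordanDecomposition.posPart) -
    (∫ x, f x ∂μ.toJordanDecomposition.negPart)

private lemma aux_ae_mem {X : Type*} [MeasurableSpace X]
    (ν : Measure X) {Z : Set X} (hν : ν Zᶜ = 0) : ∀ᵐ x ∂ν, x ∈ Z := by
  rw [ae_iff]
  simpa [Set.compl_def] using hν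

private lemma aux_integrable {X : Type*} [MeasurableSpace X] [TopologicalSpace X]
    [OpensMeasurableSpace X] (ν : Measure X) [IsFiniteMeasure ν] {Z : Set X}
    (hν : ν Zᶜ = 0) (hZ : IsCompact Z) {f : X → ℝ} (hf : Continuous f) :
    Integrable f ν := by
  obtain ⟨C, hC⟩ := hZ.exists_bound_of_continuousOn hf.continuousOn
  refine Integrable.mono' (integrable_const C) hf.aestronglyMeasurable ?_
  filter_upwards [aux_ae_mem ν hν] with x hx using hC x hx

private lemma aux_tendsto {X : Type*} [MeasurableSpace X]
    (ν : Measure X) [IsFiniteMeasure ν] {Z : Set X} (hν : ν Zᶜ = 0)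
    {ι : Type*} {l : Filter ι} [l.IsCountablyGenerated]
    {F : ι → X → ℝ} {f : X → ℝ}
    (hF : ∀ i, AEStronglyMeasurable (F i) ν)
    {C : ℝ} (hbound : ∀ᶠ i in l, ∀ x ∈ Z, |F i x| ≤ C)
    (hlim : ∀ x ∈ Z, Tendsto (fun i => F i x) l (nhds (f x))) :
    Tendsto (fun i => ∫ x, F i x ∂ν) l (nhds (∫ x, f x ∂ν)) := by
  refine tendsto_integral_filter_of_dominated_convergence (fun _ => C)
    (Eventually.of_forall hF) ?_ (integrable_const C) ?_
  · filter_upwards [hbound] with i hi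
    filter_upwards [aux_ae_mem ν hν] with x hx
    simpa [Real.norm_eq_abs] using hi x hx
  · filter_upwards [aux_ae_mem ν hν] with x hx using hlim x hx

/-- For a Hilbert-Schmidt kernel `K(x,y) = Σₙ φₙ(x)φₙ(y)` converging uniformly on compact
sets, a finite signed Borel measure `μ` supported on a compact set `Z` annihilates
`K(x,·)` for all `x ∈ Z` iff it annihilates each `φₙ`. -/
theorem hilbert_schmidt_annihilation_iff_compact
    {X : Type*} [MetricSpace X] [MeasurableSpace X] [BorelSpace X]
    {I : Type*} [Countable I]
    (φ : I → X → ℝ) (hφ : ∀ n, Continuous (φ n))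
    (K : X → X → ℝ) (hK : ∀ x y, K x y = ∑' n, φ n x * φ n y)
    (huc : ∀ Z : Set X, IsCompact Z →
      TendstoUniformlyOn (fun (s : Finset I) (p : X × X) => ∑ n ∈ s, φ n p.1 * φ n p.2)
        (fun p => K p.1 p.2) atTop (Z ×ˢ Z))
    (Z : Set X) (hZ : IsCompact Z)
    (μ : SignedMeasure X)
    (hsupp : ∀ s : Set X, MeasurableSet s → s ⊆ Zᶜ → μ s = 0) :
    (∀ x ∈ Z, sintegral μ (fun y => K x y) = 0) ↔
      ∀ n : I, sintegral μ (fun y => φ n y) = 0 := by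
  classical
  have hZm : MeasurableSet Z := hZ.isClosed.measurableSet
  obtain ⟨i, hi₁, hi₂, hi₃, hpos, hneg⟩ := μ.toJordanDecomposition_spec
  set ν₁ := μ.toJordanDecomposition.posPart with hν₁def
  set ν₂ := μ.toJordanDecomposition.negPart with hν₂def
  have hν₁ : ν₁ Zᶜ = 0 := by
    rw [hpos, SignedMeasure.toMeasureOfZeroLE_apply _ hi₂ hi₁ hZm.compl]
    simp [hsupp (i ∩ Zᶜ) (hi₁.inter hZm.compl) Set.inter_subset_right]
  have hν₂ : ν₂ Zᶜ = 0 := by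
    rw [hneg, SignedMeasure.toMeasureOfLEZero_apply _ hi₃ hi₁.compl hZm.compl]
    simp [hsupp (iᶜ ∩ Zᶜ) (hi₁.compl.inter hZm.compl) Set.inter_subset_right]
  -- continuity of partial sums and of K on Z ×ˢ Z
  have hpcont : ∀ s : Finset I, Continuous fun p : X × X => ∑ n ∈ s, φ n p.1 * φ n p.2 :=
    fun s => continuous_finset_sum _ fun n _ =>
      ((hφ n).comp continuous_fst).mul ((hφ n).comp continuous_snd)
  have hKcont : ContinuousOn (fun p : X × X => K p.1 p.2) (Z ×ˢ Z) :=
    (huc Z hZ).continuousOn (Eventually.of_forall fun s => (hpcont s).continuousOn).frequently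
  obtain ⟨C, hC⟩ := (hZ.prod hZ).exists_bound_of_continuousOn hKcont
  -- eventual uniform bound on partial sums on Z × Z
  have hbound : ∀ᶠ s : Finset I in atTop,
      ∀ p ∈ Z ×ˢ Z, |∑ n ∈ s, φ n p.1 * φ n p.2| ≤ C + 1 := by
    have h1 := (Metric.tendstoUniformlyOn_iff.mp (huc Z hZ)) 1 one_pos
    filter_upwards [h1] with s hs p hp
    have := hs p hp
    have h2 : |∑ n ∈ s, φ n p.1 * φ n p.2 - K p.1 p.2| < 1 := by
      rw [abs_sub_comm]
      simpa [Real.dist_eq] using this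
    calc |∑ n ∈ s, φ n p.1 * φ n p.2|
        ≤ |∑ n ∈ s, φ n p.1 * φ n p.2 - K p.1 p.2| + |K p.1 p.2| := by
          simpa using abs_add_le (∑ n ∈ s, φ n p.1 * φ n p.2 - K p.1 p.2) (K p.1 p.2)
      _ ≤ 1 + C := add_le_add h2.le (by simpa [Real.norm_eq_abs] using hC p hp)
      _ = C + 1 := by ring
  -- the basic rewriting of finite sums as integrals
  have hsum_eq : ∀ (ν : Measure X) (_ : IsFiniteMeasure ν) (_ : ν Zᶜ = 0)
      (x : X) (s : Finset I),
      ∫ y, ∑ n ∈ s, φ n x * φ n y ∂ν = ∑ n ∈ s, φ n x * ∫ y, φ n y ∂ν := by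
    intro ν hfin hν x s
    rw [integral_finset_sum]
    · exact Finset.sum_congr rfl fun n _ => integral_const_mul _ _
    · exact fun n _ => (aux_integrable ν hν hZ (hφ n)).const_mul _
  -- key: convergence of partial integrals to the integral of K(x,·)
  have key : ∀ (ν : Measure X) (_ : IsFiniteMeasure ν) (_ : ν Zᶜ = 0) (x : X) (_ : x ∈ Z),
      Tendsto (fun s : Finset I => ∑ n ∈ s, φ n x * ∫ y, φ n y ∂ν) atTop
        (nhds (∫ y, K x y ∂ν)) := by
    intro ν hfin hν x hx
    have := aux_tendsto ν hν (l := (atTop : Filter (Finset I)))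
      (F := fun s y => ∑ n ∈ s, φ n x * φ n y) (f := fun y => K x y)
      (fun s => (continuous_finset_sum _ fun n _ =>
        continuous_const.mul (hφ n)).aestronglyMeasurable)
      (C := C + 1) ?_ ?_
    · simpa only [hsum_eq ν hfin hν x] using this
    · filter_upwards [hbound] with s hs y hy
      exact hs (x, y) (Set.mk_mem_prod hx hy)
    · intro y hy
      exact (huc Z hZ).tendsto_at (Set.mk_mem_prod hx hy)
  constructor
  · -- forward direction
    intro h n
    set a : I → ℝ := fun n => sintegral μ (fun y => φ n y) with ha
    have haeq : ∀ n, a n = (∫ y, φ n y ∂ν₁) - ∫ y, φ n y ∂ν₂ := fun n => rfl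
    -- g s x := ∑ n ∈ s, φ n x * a n tends to 0 pointwise on Z
    have hglim : ∀ x ∈ Z,
        Tendsto (fun s : Finset I => ∑ n ∈ s, φ n x * a n) atTop (nhds 0) := by
      intro x hx
      have h1 := key ν₁ inferInstance hν₁ x hx
      have h2 := key ν₂ inferInstance hν₂ x hx
      have h3 := h1.sub h2
      have h4 : (fun s : Finset I => (∑ n ∈ s, φ n x * ∫ y, φ n y ∂ν₁) -
          ∑ n ∈ s, φ n x * ∫ y, φ n y ∂ν₂) = fun s => ∑ n ∈ s, φ n x * a n := by
        funext s
        rw [← Finset.sum_sub_distrib]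
        exact Finset.sum_congr rfl fun n _ => by rw [haeq n]; ring
      rw [h4] at h3
      have h5 : (∫ y, K x y ∂ν₁) - ∫ y, K x y ∂ν₂ = 0 := h x hx
      rwa [h5] at h3
    -- eventual uniform bound for g on Z
    set M : ℝ := (C + 1) * (ν₁ Set.univ).toReal + (C + 1) * (ν₂ Set.univ).toReal with hM
    have hgbound : ∀ᶠ s : Finset I in atTop, ∀ x ∈ Z, |∑ n ∈ s, φ n x * a n| ≤ M := by
      filter_upwards [hbound] with s hs x hx
      have e1 : ∑ n ∈ s, φ n x * a n = (∫ y, ∑ n ∈ s, φ n x * φ n y ∂ν₁) -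
          ∫ y, ∑ n ∈ s, φ n x * φ n y ∂ν₂ := by
        rw [hsum_eq ν₁ inferInstance hν₁ x, hsum_eq ν₂ inferInstance hν₂ x,
          ← Finset.sum_sub_distrib]
        exact Finset.sum_congr rfl fun n _ => by rw [haeq n]; ring
      have b1 : ‖∫ y, ∑ n ∈ s, φ n x * φ n y ∂ν₁‖ ≤ (C + 1) * (ν₁ Set.univ).toReal := by
        refine norm_integral_le_of_norm_le_const ?_
        filter_upwards [aux_ae_mem ν₁ hν₁] with y hy
        simpa [Real.norm_eq_abs] using hs (x, y) (Set.mk_mem_prod hx hy)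
      have b2 : ‖∫ y, ∑ n ∈ s, φ n x * φ n y ∂ν₂‖ ≤ (C + 1) * (ν₂ Set.univ).toReal := by
        refine norm_integral_le_of_norm_le_const ?_
        filter_upwards [aux_ae_mem ν₂ hν₂] with y hy
        simpa [Real.norm_eq_abs] using hs (x, y) (Set.mk_mem_prod hx hy)
      rw [e1]
      calc |(∫ y, ∑ n ∈ s, φ n x * φ n y ∂ν₁) - ∫ y, ∑ n ∈ s, φ n x * φ n y ∂ν₂|
          ≤ |∫ y, ∑ n ∈ s, φ n x * φ n y ∂ν₁| + |∫ y, ∑ n ∈ s, φ n x * φ n y ∂ν₂| :=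
            abs_sub _ _
        _ ≤ M := by
            rw [hM]
            exact add_le_add (by simpa [Real.norm_eq_abs] using b1)
              (by simpa [Real.norm_eq_abs] using b2)
    -- integrate g against ν₁ and ν₂
    have hmeas : ∀ s : Finset I,
        AEStronglyMeasurable (fun x => ∑ n ∈ s, φ n x * a n) (ν₁) :=
      fun s => (continuous_finset_sum _ fun n _ => (hφ n).mul continuous_const)
        |>.aestronglyMeasurable
    have hmeas' : ∀ s : Finset I,
        AEStronglyMeasurable (fun x => ∑ n ∈ s, φ n x * a n) (ν₂) :=
      fun s => (continuous_finset_sum _ fun n _ => (hφ n).mul continuous_const)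
        |>.aestronglyMeasurable
    have t1 : Tendsto (fun s : Finset I => ∫ x, ∑ n ∈ s, φ n x * a n ∂ν₁) atTop
        (nhds (∫ _x, (0 : ℝ) ∂ν₁)) :=
      aux_tendsto ν₁ hν₁ hmeas hgbound (fun x hx => hglim x hx)
    have t2 : Tendsto (fun s : Finset I => ∫ x, ∑ n ∈ s, φ n x * a n ∂ν₂) atTop
        (nhds (∫ _x, (0 : ℝ) ∂ν₂)) :=
      aux_tendsto ν₂ hν₂ hmeas' hgbound (fun x hx => hglim x hx)
    have t3 := t1.sub t2
    have e2 : ∀ (ν : Measure X) (_ : IsFiniteMeasure ν) (_ : ν Zᶜ = 0) (s : Finset I),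
        ∫ x, ∑ n ∈ s, φ n x * a n ∂ν = ∑ n ∈ s, (∫ x, φ n x ∂ν) * a n := by
      intro ν hfin hν s
      rw [integral_finset_sum _ (fun n _ => (aux_integrable ν hν hZ (hφ n)).mul_const _)]
      exact Finset.sum_congr rfl fun n _ => integral_mul_const _ _
    have e3 : (fun s : Finset I => (∫ x, ∑ n ∈ s, φ n x * a n ∂ν₁) -
        ∫ x, ∑ n ∈ s, φ n x * a n ∂ν₂) = fun s => ∑ n ∈ s, a n ^ 2 := by
      funext s
      rw [e2 ν₁ inferInstance hν₁ s, e2 ν₂ inferInstance hν₂ s, ← Finset.sum_sub_distrib]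
      exact Finset.sum_congr rfl fun n _ => by rw [haeq n]; ring
    rw [e3] at t3
    simp only [integral_zero, sub_zero] at t3
    have hhs : HasSum (fun n => a n ^ 2) 0 := t3
    have h6 : a n ^ 2 ≤ 0 := le_hasSum hhs n fun m _ => sq_nonneg _
    have h7 : a n ^ 2 = 0 := le_antisymm h6 (sq_nonneg _)
    exact (pow_eq_zero_iff two_ne_zero).mp h7
  · -- backward direction
    intro h x hx
    have h1 := key ν₁ inferInstance hν₁ x hx
    have h2 := key ν₂ inferInstance hν₂ x hx
    have h3 := h1.sub h2
    have h4 : (fun s : Finset I => (∑ n ∈ s, φ n x * ∫ y, φ n y ∂ν₁) -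
        ∑ n ∈ s, φ n x * ∫ y, φ n y ∂ν₂) = fun _ => (0 : ℝ) := by
      funext s
      rw [← Finset.sum_sub_distrib]
      refine Finset.sum_eq_zero fun n _ => ?_
      have := h n
      have hn : (∫ y, φ n y ∂ν₁) - ∫ y, φ n y ∂ν₂ = 0 := this
      calc φ n x * ∫ y, φ n y ∂ν₁ - φ n x * ∫ y, φ n y ∂ν₂
          = φ n x * ((∫ y, φ n y ∂ν₁) - ∫ y, φ n y ∂ν₂) := by ring
        _ = 0 := by rw [hn, mul_zero]
    rw [h4] at h3
    exact (tendsto_nhds_unique tendsto_const_nhds h3).symm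
end

section
/- Let φₙ : X → ℝ be continuous functions on a metric space X and λₙ ≥ 0 with |φₙ(x)| ≤ λₙ for all x ∈ X and Σₙ λₙ < ∞. Set K(x,y) = Σₙ φₙ(x)φₙ(y). Then for every finite signed Borel measure μ on X: ∫_X K(x,y) dμ(y) = 0 for all x ∈ X if and only if ∫_X φₙ(y) dμ(y) = 0 for all n. -/
open MeasureTheory
open scoped ENNReal NNReal

lemma interchange_aux {X : Type*} [MeasurableSpace X] {I : Type*} [Countable I]
    (ν : Measure X) [IsFiniteMeasure ν]
    (f : I → X → ℝ) (hf : ∀ n, AEStronglyMeasurable (f n) ν)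
    (b : I → ℝ) (hbd : ∀ n x, |f n x| ≤ b n) (hbsum : Summable b) :
    ∫ y, ∑' n, f n y ∂ν = ∑' n, ∫ y, f n y ∂ν := by
  apply integral_tsum hf
  have hle : ∀ n, (∫⁻ y, ‖f n y‖₊ ∂ν) ≤ (‖b n‖₊ : ℝ≥0∞) * ν Set.univ := by
    intro n
    calc ∫⁻ y, ‖f n y‖₊ ∂ν ≤ ∫⁻ _, (‖b n‖₊ : ℝ≥0∞) ∂ν := by
          apply lintegral_mono
          intro y
          have : ‖f n y‖ ≤ ‖b n‖ := (hbd n y).trans (le_abs_self _)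
          exact ENNReal.coe_le_coe.mpr this
      _ = (‖b n‖₊ : ℝ≥0∞) * ν Set.univ := by simp [lintegral_const]
  refine ne_top_of_le_ne_top ?_ (ENNReal.tsum_le_tsum hle)
  rw [ENNReal.tsum_mul_right]
  refine ENNReal.mul_ne_top ?_ (measure_ne_top ν _)
  exact ENNReal.tsum_coe_ne_top_iff_summable.mpr
    (NNReal.summable_coe.mp (by simpa only [coe_nnnorm] using hbsum.norm) :
      Summable fun i => ‖b i‖₊)

lemma sintegral_tsum {X : Type*} [MeasurableSpace X] {I : Type*} [Countable I]
    (μ : SignedMeasure X)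
    (f : I → X → ℝ) (hf : ∀ n, StronglyMeasurable (f n))
    (b : I → ℝ) (hbd : ∀ n x, |f n x| ≤ b n) (hbsum : Summable b) :
    sintegral μ (fun y => ∑' n, f n y) = ∑' n, sintegral μ (f n) := by
  set P := μ.toJordanDecomposition.posPart
  set N := μ.toJordanDecomposition.negPart
  have hsP : Summable fun n => ∫ y, f n y ∂P := by
    apply Summable.of_norm_bounded
      (hbsum.mul_right (P Set.univ).toReal)
    intro n
    exact norm_integral_le_of_norm_le_const (Filter.Eventually.of_forall fun y => by
      simpa [Real.norm_eq_abs] using hbd n y)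
  have hsN : Summable fun n => ∫ y, f n y ∂N := by
    apply Summable.of_norm_bounded
      (hbsum.mul_right (N Set.univ).toReal)
    intro n
    exact norm_integral_le_of_norm_le_const (Filter.Eventually.of_forall fun y => by
      simpa [Real.norm_eq_abs] using hbd n y)
  simp only [sintegral]
  rw [interchange_aux P f (fun n => (hf n).aestronglyMeasurable) b hbd hbsum,
      interchange_aux N f (fun n => (hf n).aestronglyMeasurable) b hbd hbsum,
      ← Summable.tsum_sub hsP hsN]

/-- For the kernel `K(x,y) = Σₙ φₙ(x)φₙ(y)` with `|φₙ| ≤ λₙ` and `Σ λₙ < ∞`, a finite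
signed Borel measure `μ` on `X` annihilates `K(x,·)` for all `x ∈ X` iff it annihilates
each `φₙ`. -/
theorem hilbert_schmidt_annihilation_iff_dominated
    {X : Type*} [MetricSpace X] [MeasurableSpace X] [BorelSpace X]
    {I : Type*} [Countable I]
    (φ : I → X → ℝ) (hφ : ∀ n, Continuous (φ n))
    (lam : I → ℝ) (hlam0 : ∀ n, 0 ≤ lam n)
    (hbd : ∀ (n : I) (x : X), |φ n x| ≤ lam n)
    (hsum : Summable lam)
    (K : X → X → ℝ) (hK : ∀ x y, K x y = ∑' n, φ n x * φ n y)
    (μ : SignedMeasure X) :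
    (∀ x : X, sintegral μ (fun y => K x y) = 0) ↔
      ∀ n : I, sintegral μ (fun y => φ n y) = 0 := by
  set P := μ.toJordanDecomposition.posPart with hP
  set N := μ.toJordanDecomposition.negPart with hN
  set c : I → ℝ := fun n => sintegral μ (fun y => φ n y) with hc
  set S : ℝ := ∑' n, lam n with hS
  have hlamS : ∀ n, lam n ≤ S := fun n => Summable.le_tsum hsum n (fun m _ => hlam0 m)
  have hS0 : 0 ≤ S := tsum_nonneg hlam0
  -- generic interchange for scaled families
  have key : ∀ (a : I → ℝ) (A : ℝ), 0 ≤ A → (∀ n, |a n| ≤ A) →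
      sintegral μ (fun y => ∑' n, a n * φ n y) = ∑' n, a n * c n := by
    intro a A hA0 hA
    have h1 : sintegral μ (fun y => ∑' n, a n * φ n y)
        = ∑' n, sintegral μ (fun y => a n * φ n y) := by
      apply sintegral_tsum μ _ (fun n => (continuous_const.mul (hφ n)).stronglyMeasurable)
        (fun n => A * lam n) ?_ (hsum.mul_left A)
      intro n y
      rw [Pi.mul_apply, abs_mul]
      exact mul_le_mul (hA n) (hbd n y) (abs_nonneg _) hA0
    rw [h1]
    refine tsum_congr fun n => ?_
    simp only [hc, sintegral, integral_const_mul]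
    ring
  -- the main computation
  have hKc : ∀ x, sintegral μ (fun y => K x y) = ∑' n, φ n x * c n := by
    intro x
    have := key (fun n => φ n x) S hS0 (fun n => (hbd n x).trans (hlamS n))
    rw [← this]
    congr 1
    funext y
    rw [hK x y]
  -- bound on c
  set M : ℝ := (P Set.univ).toReal + (N Set.univ).toReal with hM
  have hM0 : 0 ≤ M := add_nonneg ENNReal.toReal_nonneg ENNReal.toReal_nonneg
  have hcbd : ∀ n, |c n| ≤ lam n * M := by
    intro n
    have h1 : ‖∫ y, φ n y ∂P‖ ≤ lam n * (P Set.univ).toReal :=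
      norm_integral_le_of_norm_le_const (Filter.Eventually.of_forall fun y => by
        simpa [Real.norm_eq_abs] using hbd n y)
    have h2 : ‖∫ y, φ n y ∂N‖ ≤ lam n * (N Set.univ).toReal :=
      norm_integral_le_of_norm_le_const (Filter.Eventually.of_forall fun y => by
        simpa [Real.norm_eq_abs] using hbd n y)
    calc |c n| ≤ ‖∫ y, φ n y ∂P‖ + ‖∫ y, φ n y ∂N‖ := by
          simpa [hc, sintegral, Real.norm_eq_abs] using abs_sub _ _
      _ ≤ lam n * (P Set.univ).toReal + lam n * (N Set.univ).toReal := add_le_add h1 h2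
      _ = lam n * M := by ring
  constructor
  · intro h n
    have hx : ∀ x, ∑' m, φ m x * c m = 0 := fun x => (hKc x) ▸ h x
    have hzero : sintegral μ (fun x => ∑' m, c m * φ m x) = 0 := by
      have : (fun x => ∑' m, c m * φ m x) = fun _ => (0 : ℝ) := by
        funext x
        rw [← hx x]
        exact tsum_congr fun m => mul_comm _ _
      rw [this]
      simp [sintegral]
    have hcc : ∑' m, c m * c m = 0 := by
      rw [← key c (S * M) (mul_nonneg hS0 hM0)
        (fun m => (hcbd m).trans (mul_le_mul_of_nonneg_right (hlamS m) hM0))]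
      exact hzero
    have hsumcc : Summable fun m => c m * c m := by
      apply Summable.of_norm_bounded (hsum.mul_left (S * M * M))
      intro m
      calc ‖c m * c m‖ = |c m| * |c m| := by rw [Real.norm_eq_abs, abs_mul]
        _ ≤ (S * M) * (lam m * M) := by
            apply mul_le_mul ((hcbd m).trans (mul_le_mul_of_nonneg_right (hlamS m) hM0))
              (hcbd m) (abs_nonneg _) (mul_nonneg hS0 hM0)
        _ = (S * M * M) * lam m := by ring
    have hn : c n * c n ≤ 0 := hcc ▸ Summable.le_tsum hsumcc n (fun m _ => mul_self_nonneg (c m))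
    have : c n * c n = 0 := le_antisymm hn (mul_self_nonneg _)
    exact mul_self_eq_zero.mp this
  · intro h x
    rw [hKc x]
    simp [show ∀ n, c n = 0 from h]
end

section
/- Let φₙ ∈ C₀(X) (n in a countable index set I) satisfy |φₙ(x)| ≤ λₙ with Σ λₙ < ∞, and let K(x,y) = Σₙ φₙ(x)φₙ(y). Then the linear span of {K(x,·) : x ∈ X} is dense in C₀(X) if and only if the linear span of {φₙ : n ∈ I} is dense in C₀(X). -/
open MeasureTheory

section Aux

variable {X : Type*} [MetricSpace X]

/-- Evaluation at a point as a continuous linear functional on `C₀(X, ℝ)`. -/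
noncomputable def evalCLM' (x : X) : ZeroAtInftyContinuousMap X ℝ →L[ℝ] ℝ :=
  LinearMap.mkContinuous
    { toFun := fun f => f x
      map_add' := fun f g => rfl
      map_smul' := fun c f => rfl } 1
    (fun f => by
      have h1 : ‖f.toBCF x‖ ≤ ‖f.toBCF‖ := f.toBCF.norm_coe_le_norm x
      have h2 : ‖f.toBCF‖ = ‖f‖ := ZeroAtInftyContinuousMap.norm_toBCF_eq_norm
      simpa [h2] using h1)

@[simp] lemma evalCLM'_apply (x : X) (f : ZeroAtInftyContinuousMap X ℝ) :
    evalCLM' x f = f x := rfl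

/-- A submodule of a real normed space is dense if every continuous linear functional
vanishing on it vanishes identically. -/
lemma dense_of_forall_dual_eq_zero {E : Type*} [NormedAddCommGroup E] [NormedSpace ℝ E]
    (p : Submodule ℝ E)
    (h : ∀ g : E →L[ℝ] ℝ, (∀ v ∈ p, g v = 0) → g = 0) :
    Dense (p : Set E) := by
  by_contra hd
  have : ¬ (closure (p : Set E) = Set.univ) := by
    intro hc; exact hd (by rw [dense_iff_closure_eq, hc])
  obtain ⟨x, hx⟩ : ∃ x, x ∉ closure (p : Set E) := by
    by_contra hno
    push_neg at hno
    exact this (Set.eq_univ_of_forall hno)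
  have hcl : (p.topologicalClosure : Set E) = closure (p : Set E) :=
    Submodule.topologicalClosure_coe p
  have hconv : Convex ℝ (closure (p : Set E)) := by
    rw [← hcl]; exact (p.topologicalClosure).convex
  obtain ⟨f, u, hfx, hfb⟩ :=
    geometric_hahn_banach_point_closed hconv isClosed_closure hx
  have h0mem : (0 : E) ∈ closure (p : Set E) := subset_closure p.zero_mem
  have hu : u < 0 := by simpa using hfb 0 h0mem
  have hf0 : ∀ b ∈ closure (p : Set E), f b = 0 := by
    intro b hb
    by_contra hb0
    have hmem : ((u - 1) / f b) • b ∈ closure (p : Set E) := by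
      rw [← hcl] at hb ⊢
      exact (p.topologicalClosure).smul_mem _ hb
    have := hfb _ hmem
    rw [_root_.map_smul, smul_eq_mul, div_mul_cancel₀ _ hb0] at this
    linarith
  have hfzero : f = 0 := h f (fun v hv => hf0 v (subset_closure hv))
  rw [hfzero] at hfx
  simp only [ContinuousLinearMap.zero_apply] at hfx
  linarith

end Aux

/-- For the kernel `K(x,y) = Σₙ φₙ(x)φₙ(y)` with `φₙ ∈ C₀(X)`, `|φₙ| ≤ λₙ` and
`Σ λₙ < ∞`, the span of `{K(x,·) : x ∈ X}` is dense in `C₀(X)` iff the span of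
`{φₙ : n ∈ I}` is dense in `C₀(X)`. -/
theorem hilbert_schmidt_c0_universal_iff_span_phi_dense
    {X : Type*} [MetricSpace X] {I : Type*} [Countable I]
    (φ : I → ZeroAtInftyContinuousMap X ℝ)
    (lam : I → ℝ) (hlam0 : ∀ n, 0 ≤ lam n)
    (hbd : ∀ (n : I) (x : X), |φ n x| ≤ lam n)
    (hsum : Summable lam)
    (K : X → X → ℝ) (hK : ∀ x y, K x y = ∑' n, φ n x * φ n y) :
    Dense (Submodule.span ℝ
        {f : ZeroAtInftyContinuousMap X ℝ | ∃ x : X, ⇑f = fun y => K x y} :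
        Set (ZeroAtInftyContinuousMap X ℝ)) ↔
      Dense (Submodule.span ℝ (Set.range φ) : Set (ZeroAtInftyContinuousMap X ℝ)) := by
  classical
  -- norm bounds
  have hnorm : ∀ n, ‖φ n‖ ≤ lam n := by
    intro n
    rw [← ZeroAtInftyContinuousMap.norm_toBCF_eq_norm]
    exact BoundedContinuousFunction.norm_le (hlam0 n) |>.mpr
      (fun x => by simpa [Real.norm_eq_abs] using hbd n x)
  set C := ∑' n, lam n with hC
  have hlamle : ∀ n, lam n ≤ C := fun n => Summable.le_tsum hsum n (fun m _ => hlam0 m)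
  have hsum2 : Summable (fun n => lam n * lam n) :=
    Summable.of_nonneg_of_le (fun n => mul_nonneg (hlam0 n) (hlam0 n))
      (fun n => mul_le_mul_of_nonneg_right (hlamle n) (hlam0 n)) (hsum.mul_left C)
  -- summability of the family x ↦ φ n x • φ n
  have hsummable : ∀ x : X, Summable (fun n => φ n x • φ n : I → ZeroAtInftyContinuousMap X ℝ) := by
    intro x
    apply Summable.of_norm
    apply Summable.of_nonneg_of_le (fun n => norm_nonneg _) _ hsum2
    intro n
    rw [norm_smul ((φ n) x) (φ n)]
    exact mul_le_mul (by simpa [Real.norm_eq_abs] using hbd n x) (hnorm n)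
      (norm_nonneg _) (hlam0 n)
  -- the tsum has the right coercion
  have htsum_eval : ∀ (x : X) (c : I → ℝ), Summable (fun n => c n • φ n : I → ZeroAtInftyContinuousMap X ℝ) →
      ∀ y, (∑' n, c n • φ n : ZeroAtInftyContinuousMap X ℝ) y = ∑' n, c n * φ n y := by
    intro x c hc y
    have := (evalCLM' y (X := X)).map_tsum hc
    simpa using this
  have hKx_eq : ∀ (x : X) (f : ZeroAtInftyContinuousMap X ℝ), ⇑f = (fun y => K x y) →
      f = ∑' n, φ n x • φ n := by
    intro x f hf
    ext y
    have hfy : f y = K x y := by rw [hf]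
    rw [hfy, hK, htsum_eval x (fun n => φ n x) (hsummable x) y]
  -- every generator K(x,·) lies in the closure of span φ
  have hgen : ∀ f ∈ {f : ZeroAtInftyContinuousMap X ℝ | ∃ x : X, ⇑f = fun y => K x y},
      f ∈ closure (Submodule.span ℝ (Set.range φ) : Set (ZeroAtInftyContinuousMap X ℝ)) := by
    rintro f ⟨x, hf⟩
    rw [hKx_eq x f hf]
    have hhs := (hsummable x).hasSum
    refine mem_closure_of_tendsto hhs ?_
    filter_upwards with s
    exact Submodule.sum_mem _ (fun n _ =>
      Submodule.smul_mem _ _ (Submodule.subset_span ⟨n, rfl⟩))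
  constructor
  · -- → : span K ⊆ closure span φ
    intro hdK
    have hsub : (Submodule.span ℝ {f : ZeroAtInftyContinuousMap X ℝ | ∃ x : X, ⇑f = fun y => K x y} : Set (ZeroAtInftyContinuousMap X ℝ))
        ⊆ closure (Submodule.span ℝ (Set.range φ) : Set (ZeroAtInftyContinuousMap X ℝ)) := by
      have hle : Submodule.span ℝ {f : ZeroAtInftyContinuousMap X ℝ | ∃ x : X, ⇑f = fun y => K x y}
          ≤ (Submodule.span ℝ (Set.range φ)).topologicalClosure := by
        rw [Submodule.span_le]
        intro f hf
        show f ∈ ((Submodule.span ℝ (Set.range φ)).topologicalClosure :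
          Set (ZeroAtInftyContinuousMap X ℝ))
        rw [Submodule.topologicalClosure_coe]
        exact hgen f hf
      intro f hf
      have h1 : f ∈ ((Submodule.span ℝ (Set.range φ)).topologicalClosure :
          Set (ZeroAtInftyContinuousMap X ℝ)) := hle hf
      rwa [Submodule.topologicalClosure_coe] at h1
    have : Dense (closure (Submodule.span ℝ (Set.range φ) : Set (ZeroAtInftyContinuousMap X ℝ))) := hdK.mono hsub
    rwa [dense_closure] at this
  · -- ← : dual argument
    intro hdφ
    apply dense_of_forall_dual_eq_zero
    intro g hg
    set c : I → ℝ := fun n => g (φ n) with hc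
    have hcbd : ∀ n, |c n| ≤ ‖g‖ * lam n := by
      intro n
      calc |c n| = ‖g (φ n)‖ := (Real.norm_eq_abs _).symm
        _ ≤ ‖g‖ * ‖φ n‖ := g.le_opNorm _
        _ ≤ ‖g‖ * lam n := mul_le_mul_of_nonneg_left (hnorm n) (norm_nonneg g)
    -- Step A: for each x, ∑ c n * φ n x = 0
    have hA : ∀ x : X, ∑' n, φ n x * c n = 0 := by
      intro x
      have hmem : (∑' n, φ n x • φ n : ZeroAtInftyContinuousMap X ℝ) ∈
          Submodule.span ℝ {f : ZeroAtInftyContinuousMap X ℝ | ∃ x : X, ⇑f = fun y => K x y} := by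
        apply Submodule.subset_span
        refine ⟨x, ?_⟩
        funext y
        rw [htsum_eval x (fun n => φ n x) (hsummable x) y, hK]
      have h0 := hg _ hmem
      rw [g.map_tsum (hsummable x)] at h0
      simpa [hc] using h0
    -- Step B: the element h := ∑ c n • φ n is zero
    have hcsum : Summable (fun n => c n • φ n : I → ZeroAtInftyContinuousMap X ℝ) := by
      apply Summable.of_norm
      apply Summable.of_nonneg_of_le (fun n => norm_nonneg _) _ ((hsum2).mul_left ‖g‖)
      intro n
      rw [norm_smul (c n) (φ n)]
      calc ‖c n‖ * ‖φ n‖ ≤ (‖g‖ * lam n) * lam n := by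
            exact mul_le_mul (by simpa [Real.norm_eq_abs] using hcbd n) (hnorm n)
              (norm_nonneg _) (mul_nonneg (norm_nonneg g) (hlam0 n))
        _ = ‖g‖ * (lam n * lam n) := by ring
    have hzero : (∑' n, c n • φ n : ZeroAtInftyContinuousMap X ℝ) = 0 := by
      ext x
      have := htsum_eval x c hcsum x
      rw [this]
      have : ∀ n, c n * φ n x = φ n x * c n := fun n => mul_comm _ _
      simp only [this]
      simpa using hA x
    have hgzero : (∑' n, c n * c n) = 0 := by
      have := g.map_tsum hcsum
      rw [hzero] at this
      simp only [map_zero] at this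
      have heq : ∀ n, g (c n • φ n) = c n * c n := by
        intro n; rw [_root_.map_smul]; simp [hc, smul_eq_mul]
      simp only [heq] at this
      exact this.symm
    have hcsummable : Summable (fun n => c n * c n) := by
      apply Summable.of_nonneg_of_le (fun n => mul_self_nonneg _) _
        (((hsum2).mul_left (‖g‖ * ‖g‖)))
      intro n
      calc c n * c n = |c n| * |c n| := (abs_mul_abs_self _).symm
        _ ≤ (‖g‖ * lam n) * (‖g‖ * lam n) :=
            mul_le_mul (hcbd n) (hcbd n) (abs_nonneg _)
              (mul_nonneg (norm_nonneg g) (hlam0 n))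
        _ = ‖g‖ * ‖g‖ * (lam n * lam n) := by ring
    have hczero : ∀ n, c n = 0 := by
      intro n
      have hle : c n * c n ≤ ∑' m, c m * c m :=
        Summable.le_tsum hcsummable n (fun m _ => mul_self_nonneg _)
      rw [hgzero] at hle
      have := le_antisymm hle (mul_self_nonneg _)
      exact mul_self_eq_zero.mp this
    -- g vanishes on range φ, hence everywhere
    have hker : Submodule.span ℝ (Set.range φ) ≤ LinearMap.ker (g : ZeroAtInftyContinuousMap X ℝ →ₗ[ℝ] ℝ) := by
      rw [Submodule.span_le]
      rintro f ⟨n, rfl⟩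
      simpa [LinearMap.mem_ker] using hczero n
    ext v
    have hv : v ∈ closure (Submodule.span ℝ (Set.range φ) : Set (ZeroAtInftyContinuousMap X ℝ)) := by
      rw [hdφ.closure_eq]; trivial
    have hcl : closure (Submodule.span ℝ (Set.range φ) : Set (ZeroAtInftyContinuousMap X ℝ)) ⊆
        (LinearMap.ker (g : ZeroAtInftyContinuousMap X ℝ →ₗ[ℝ] ℝ) : Set (ZeroAtInftyContinuousMap X ℝ)) := by
      apply closure_minimal _ (ContinuousLinearMap.isClosed_ker g)
      exact_mod_cast hker
    simpa using hcl hv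
end
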